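/- Let α > 0, β > 0, 1 < r < 2 and R > 0 with R^{r−1} ≤ α/(β(2−r)). Set M_f = α(r−1)/(2−r). Then for every M > 0, min( M β^{1/(r−1)} (α+M)^{−1/(r−1)}, M/R ) ≤ α^{(2−r)/(1−r)} β^{1/(r−1)} (2−r)^{(2−r)/(r−1)} (r−1), with equality when M = M_f. In particular, sup_{M>0} min( M β^{1/(r−1)} (α+M)^{−1/(r−1)}, M/R ) = α^{(2−r)/(1−r)} β^{1/(r−1)} (2−r)^{(2−r)/(r−1)} (r−1), attained at M = M_f. -/

import Mathlib

open Real Set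

/-- case `1 < r < 2`, `R^{r−1} ≤ α/(β(2−r))`: with `M_f = α(r−1)/(2−r)`,
`min(f(M), M/R) ≤ α^{(2−r)/(1−r)} β^{1/(r−1)} (2−r)^{(2−r)/(r−1)} (r−1)` for all `M > 0`,
with equality at `M = M_f`; in particular the supremum equals that value, attained at `M_f`. -/
theorem stmt4 (α β r R : ℝ) (hα : 0 < α) (hβ : 0 < β) (hr1 : 1 < r) (hr2 : r < 2)
    (hR : 0 < R) (hcond : R ^ (r - 1) ≤ α / (β * (2 - r))) :
    (∀ M : ℝ, 0 < M →
      min (M * β ^ (1 / (r - 1)) * (α + M) ^ (-(1 / (r - 1)))) (M / R)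
        ≤ α ^ ((2 - r) / (1 - r)) * β ^ (1 / (r - 1)) * (2 - r) ^ ((2 - r) / (r - 1)) * (r - 1)) ∧
    min ((α * (r - 1) / (2 - r)) * β ^ (1 / (r - 1)) *
          (α + α * (r - 1) / (2 - r)) ^ (-(1 / (r - 1))))
        ((α * (r - 1) / (2 - r)) / R)
      = α ^ ((2 - r) / (1 - r)) * β ^ (1 / (r - 1)) * (2 - r) ^ ((2 - r) / (r - 1)) * (r - 1) ∧
    IsGreatest
      ((fun M : ℝ => min (M * β ^ (1 / (r - 1)) * (α + M) ^ (-(1 / (r - 1)))) (M / R)) ''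
        Set.Ioi 0)
      (α ^ ((2 - r) / (1 - r)) * β ^ (1 / (r - 1)) * (2 - r) ^ ((2 - r) / (r - 1)) * (r - 1)) := by
  set p : ℝ := 1 / (r - 1) with hp_def
  have hrm : 0 < r - 1 := by linarith
  have h2r : 0 < 2 - r := by linarith
  have hp1 : 1 < p := by
    rw [hp_def]
    rw [lt_div_iff₀ hrm]; linarith
  have hp0 : 0 < p := by linarith
  set Mf : ℝ := α * (r - 1) / (2 - r) with hMf_def
  have hMf : 0 < Mf := by positivity
  have hsum : α + Mf = α / (2 - r) := by
    rw [hMf_def]; field_simp; ring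
  have hsum_pos : 0 < α + Mf := by positivity
  have hpMf : p * Mf = α + Mf := by
    rw [hsum, hMf_def, hp_def]
    field_simp
  -- Key: for all M > 0, f(M) ≤ f(Mf)
  have keyA : ∀ M : ℝ, 0 < M →
      M * β ^ p * (α + M) ^ (-p) ≤ Mf * β ^ p * (α + Mf) ^ (-p) := by
    intro M hM
    have hM_pos : 0 < α + M := by positivity
    have key : M * (α + Mf) ^ p ≤ Mf * (α + M) ^ p := by
      set u : ℝ := (α + M) / (α + Mf) with hu_def
      have hu : 0 < u := by positivity
      have hMu : α + M = (α + Mf) * u := by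
        rw [hu_def]; field_simp
      have hbern : 1 + p * (u - 1) ≤ u ^ p := by
        have := one_add_mul_self_le_rpow_one_add (s := u - 1) (by linarith) hp1.le
        simpa using this
      have hMle : M = Mf * (1 + p * (u - 1)) := by
        have : Mf * (1 + p * (u - 1)) = Mf + (p * Mf) * (u - 1) := by ring
        rw [this, hpMf]
        nlinarith [hMu]
      calc M * (α + Mf) ^ p = Mf * (1 + p * (u - 1)) * (α + Mf) ^ p := by rw [← hMle]
        _ ≤ Mf * u ^ p * (α + Mf) ^ p := by
            have h1 : 0 ≤ (α + Mf) ^ p := (Real.rpow_pos_of_pos hsum_pos p).le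
            have h2 : Mf * (1 + p * (u - 1)) ≤ Mf * u ^ p :=
              mul_le_mul_of_nonneg_left hbern hMf.le
            exact mul_le_mul_of_nonneg_right h2 h1
        _ = Mf * ((α + Mf) * u) ^ p := by
            rw [Real.mul_rpow hsum_pos.le hu.le]; ring
        _ = Mf * (α + M) ^ p := by rw [← hMu]
    rw [Real.rpow_neg hM_pos.le, Real.rpow_neg hsum_pos.le]
    rw [mul_assoc, mul_assoc, mul_comm (β ^ p), mul_comm (β ^ p), ← mul_assoc, ← mul_assoc]
    apply mul_le_mul_of_nonneg_right _ (Real.rpow_pos_of_pos hβ p).le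
    rw [← div_eq_mul_inv, ← div_eq_mul_inv,
      div_le_div_iff₀ (Real.rpow_pos_of_pos hM_pos p) (Real.rpow_pos_of_pos hsum_pos p)]
    exact key
  -- f(Mf) ≤ Mf/R
  have keyB : Mf * β ^ p * (α + Mf) ^ (-p) ≤ Mf / R := by
    have h1 : β * R ^ (r - 1) ≤ α / (2 - r) := by
      rw [le_div_iff₀ h2r]
      have := (le_div_iff₀ (by positivity : (0:ℝ) < β * (2 - r))).mp hcond
      linarith [this]
    have h2 : (β * R ^ (r - 1)) ^ p ≤ (α / (2 - r)) ^ p :=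
      Real.rpow_le_rpow (by positivity) h1 hp0.le
    have h3 : (β * R ^ (r - 1)) ^ p = β ^ p * R := by
      rw [Real.mul_rpow hβ.le (by positivity), ← Real.rpow_mul hR.le,
        show (r - 1) * p = 1 by rw [hp_def]; field_simp, Real.rpow_one]
    have h4 : β ^ p * R ≤ (α + Mf) ^ p := by rw [hsum]; rw [← h3]; exact h2
    rw [Real.rpow_neg hsum_pos.le, mul_assoc, ← div_eq_mul_inv, ← mul_div_assoc]
    rw [div_le_div_iff₀ (Real.rpow_pos_of_pos hsum_pos p) hR]
    calc Mf * β ^ p * R = Mf * (β ^ p * R) := by ring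
      _ ≤ Mf * (α + Mf) ^ p := mul_le_mul_of_nonneg_left h4 hMf.le

  -- value identity
  have h1r : 1 - r ≠ 0 := by linarith
  have hrm' : r - 1 ≠ 0 := ne_of_gt hrm
  have hexp1 : (2 - r) / (1 - r) = 1 - p := by
    rw [hp_def]; field_simp; ring
  have hexp2 : (2 - r) / (r - 1) = p - 1 := by
    rw [hp_def]; field_simp; ring
  have hval : Mf * β ^ p * (α + Mf) ^ (-p)
      = α ^ ((2 - r) / (1 - r)) * β ^ p * (2 - r) ^ ((2 - r) / (r - 1)) * (r - 1) := by
    rw [hexp1, hexp2, hsum]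
    rw [Real.rpow_neg (by positivity), Real.div_rpow hα.le h2r.le]
    rw [Real.rpow_sub hα, Real.rpow_sub h2r, Real.rpow_one, Real.rpow_one]
    rw [hMf_def]
    have hαp : (0:ℝ) < α ^ p := Real.rpow_pos_of_pos hα p
    have h2rp : (0:ℝ) < (2 - r) ^ p := Real.rpow_pos_of_pos h2r p
    field_simp
  refine ⟨?_, ?_, ?_⟩
  · intro M hM
    exact le_trans (min_le_left _ _) (le_trans (keyA M hM) (le_of_eq hval))
  · rw [min_eq_left keyB]; exact hval
  · constructor
    · exact ⟨Mf, hMf, by simpa using (min_eq_left keyB).trans hval⟩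
    · rintro v ⟨M, hM, rfl⟩
      exact le_trans (min_le_left _ _) (le_trans (keyA M (mem_Ioi.mp hM)) (le_of_eq hval))
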